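/- Let f : 2^V → ℝ be submodular with f(∅)=0 and S a nonempty proper subset of V. With g and λ, λ' as above, X ⊆ V∖S minimizes g(X) − λ' w(X) over subsets of V∖S if and only if X ∪ S minimizes f(Y) − λ w(Y) over subsets Y ⊆ V containing S. -/

import Mathlib

open Finset

/-- `X ⊆ V ∖ S` minimizes `g(X) − λ' w(X)` over subsets of `V ∖ S` iff
`X ∪ S` minimizes `f(Y) − λ w(Y)` over subsets `Y ⊆ V` containing `S`, where
`g(X) = f(X ∪ S) − f(S)(w(X)/w(S) + 1)`, `λ = (f(V) − f(S))/w(V ∖ S)` and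
`λ' = g(V ∖ S)/w(V ∖ S)`. -/
theorem contraction_minimizer_correspondence
    {V : Type*} [Fintype V] [DecidableEq V]
    (f : Finset V → ℝ) (hf0 : f ∅ = 0)
    (hsub : ∀ X Y : Finset V, f (X ∪ Y) + f (X ∩ Y) ≤ f X + f Y)
    (w : V → ℝ) (hw : ∀ i, 0 < w i)
    (S : Finset V) (hS : S.Nonempty) (hSne : S ≠ Finset.univ)
    (g : Finset V → ℝ)
    (hg : ∀ X : Finset V,
      g X = f (X ∪ S) - f S * ((∑ i ∈ X, w i) / (∑ i ∈ S, w i) + 1))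
    (lam lam' : ℝ)
    (hlam : lam = (f Finset.univ - f S) / ∑ i ∈ Finset.univ \ S, w i)
    (hlam' : lam' = g (Finset.univ \ S) / ∑ i ∈ Finset.univ \ S, w i)
    (X : Finset V) (hX : X ⊆ Finset.univ \ S) :
    (∀ Z : Finset V, Z ⊆ Finset.univ \ S →
        g X - lam' * ∑ i ∈ X, w i ≤ g Z - lam' * ∑ i ∈ Z, w i)
      ↔
    (∀ Y : Finset V, S ⊆ Y →
        f (X ∪ S) - lam * ∑ i ∈ X ∪ S, w i ≤ f Y - lam * ∑ i ∈ Y, w i) := by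

  have hwS : (0:ℝ) < ∑ i ∈ S, w i := Finset.sum_pos (fun i _ => hw i) hS
  have hC : (Finset.univ \ S).Nonempty := by
    rw [Finset.sdiff_nonempty]
    simpa using fun h => hSne (le_antisymm (Finset.subset_univ S) h)
  have hwC : (0:ℝ) < ∑ i ∈ Finset.univ \ S, w i := Finset.sum_pos (fun i _ => hw i) hC
  have hunion : (Finset.univ \ S) ∪ S = Finset.univ :=
    Finset.sdiff_union_of_subset (Finset.subset_univ S)
  set wS := ∑ i ∈ S, w i with hwSdef
  set wC := ∑ i ∈ Finset.univ \ S, w i with hwCdef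
  have hlam'eq : lam' = lam - f S / wS := by
    have huniv : ∑ i : V, w i = wC + wS := (Finset.sum_sdiff (Finset.subset_univ S)).symm
    rw [hlam', hg, hunion, hlam]
    field_simp
    rw [← hwCdef]
    ring
  -- key identity
  have key : ∀ Z : Finset V, Z ⊆ Finset.univ \ S →
      g Z - lam' * ∑ i ∈ Z, w i
        = (f (Z ∪ S) - lam * ∑ i ∈ Z ∪ S, w i) + (lam * ∑ i ∈ S, w i - f S) := by
    intro Z hZ
    have hdisj : Disjoint Z S :=
      Finset.disjoint_left.mpr fun i hi => (Finset.mem_sdiff.mp (hZ hi)).2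
    have hsum : ∑ i ∈ Z ∪ S, w i = (∑ i ∈ Z, w i) + ∑ i ∈ S, w i :=
      Finset.sum_union hdisj
    rw [hg, hsum, hlam'eq, ← hwSdef]
    field_simp
    ring
  constructor
  · intro h Y hSY
    have hZ : Y \ S ⊆ Finset.univ \ S := Finset.sdiff_subset_sdiff (Finset.subset_univ Y) le_rfl
    have hYS : (Y \ S) ∪ S = Y := Finset.sdiff_union_of_subset hSY
    have := h (Y \ S) hZ
    rw [key X hX, key (Y \ S) hZ, hYS] at this
    linarith
  · intro h Z hZ
    have := h (Z ∪ S) (Finset.subset_union_right)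
    rw [key X hX, key Z hZ]
    linarith
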